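/- For every n ≥ 1, every integer m with 1 ≤ m ≤ n−1, and every complex vector t = (t_α) indexed by the m-element subsets α of {1,…,n}, one has t*Ψ_m t ≥ 0; that is, the Hermitian form Ψ_m is positive semidefinite. -/

import Mathlib

open scoped ComplexOrder

/-- The Hermitian form `Ψ_m` on complex vectors indexed by subsets of `{1,…,n}`
(only the values on `m`-element subsets matter). -/
noncomputable def psiForm (n m : ℕ) (t : Finset (Fin n) → ℂ) : ℂ :=
  ∑ j ∈ Finset.range (m + 1),
    ((m : ℂ) * ((n : ℂ) - m) -
        ((m : ℂ) + 1) * ((n : ℂ) - m + 1) * ((m : ℂ) - j) / ((m : ℂ) - j + 1)) *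
      ∑ α ∈ Finset.univ.powersetCard m, ∑ β ∈ Finset.univ.powersetCard m,
        if (α ∩ β).card = j then (starRingEnd ℂ) (t α) * t β else 0

open Finset ComplexConjugate

lemma sum_div_choose (j m : ℕ) (hjm : j ≤ m) :
    ∑ k ∈ Finset.range (m+1), (j.choose k : ℂ) / (m.choose k)
      = ((m:ℂ)+1) / ((m:ℂ) - j + 1) := by
  have h1 : ∑ k ∈ Finset.range (m+1), (j.choose k : ℂ) / (m.choose k)
      = ∑ k ∈ Finset.range (j+1), (j.choose k : ℂ) / (m.choose k) := by
    refine (Finset.sum_subset (Finset.range_subset_range.2 (Nat.succ_le_succ hjm)) ?_).symm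
    intro k _ hk
    rw [Finset.mem_range, not_lt] at hk
    rw [Nat.choose_eq_zero_of_lt (by omega)]
    simp
  have hmj : (m.choose j : ℂ) ≠ 0 := Nat.cast_ne_zero.2 (Nat.choose_pos hjm).ne'
  have h2 : ∀ k ∈ Finset.range (j+1),
      (j.choose k : ℂ) / (m.choose k) = ((m-k).choose (j-k) : ℂ) / (m.choose j) := by
    intro k hk
    rw [Finset.mem_range] at hk
    have hkj : k ≤ j := by omega
    have hmk : (m.choose k : ℂ) ≠ 0 := Nat.cast_ne_zero.2 (Nat.choose_pos (by omega)).ne'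
    rw [div_eq_div_iff hmk hmj]
    have := Nat.choose_mul (n := m) hkj
    have hnat : j.choose k * m.choose j = (m-k).choose (j-k) * m.choose k := by
      rw [mul_comm, this, mul_comm]
    exact_mod_cast congrArg (Nat.cast : ℕ → ℂ) hnat
  rw [h1, Finset.sum_congr rfl h2, ← Finset.sum_div]
  have h3 : ∑ k ∈ Finset.range (j+1), ((m-k).choose (j-k) : ℂ)
      = ((m+1).choose j : ℂ) := by
    rw [← Nat.cast_sum]
    norm_cast
    rw [← Finset.sum_range_reflect (fun k => (m-k).choose (j-k)) (j+1)]
    have hc : ∀ k ∈ Finset.range (j+1),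
        (m - (j + 1 - 1 - k)).choose (j - (j + 1 - 1 - k)) = (k + (m-j)).choose (m-j) := by
      intro k hk
      rw [Finset.mem_range] at hk
      have e1 : j - (j + 1 - 1 - k) = k := by omega
      have e2 : m - (j + 1 - 1 - k) = k + (m - j) := by omega
      rw [e1, e2]
      have hle : m - j ≤ k + (m - j) := by omega
      have := Nat.choose_symm hle
      have e3 : k + (m - j) - (m - j) = k := by omega
      rw [e3] at this
      exact this
    rw [Finset.sum_congr rfl hc, Nat.sum_range_add_choose j (m-j)]
    have e4 : j + (m - j) + 1 = m + 1 := by omega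
    have e5 : (m+1) - j = (m - j) + 1 := by omega
    rw [e4, ← Nat.choose_symm (show j ≤ m + 1 by omega), e5]
  rw [h3]
  have hd : ((m:ℂ) - j + 1) ≠ 0 := by
    have : ((m:ℂ) - j + 1) = ((m + 1 - j : ℕ) : ℂ) := by
      push_cast [Nat.cast_sub (show j ≤ m + 1 by omega)]; ring
    rw [this]
    exact Nat.cast_ne_zero.2 (by omega)
  rw [div_eq_div_iff hmj hd]
  have := Nat.choose_mul_succ_eq m j
  have hcast : ((m+1).choose j : ℂ) * ((m:ℂ) - j + 1) = ((m+1).choose j : ℂ) * ((m + 1 - j : ℕ) : ℂ) := by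
    push_cast [Nat.cast_sub (show j ≤ m + 1 by omega)]; ring
  rw [hcast, ← Nat.cast_mul, ← this]
  push_cast; ring

lemma coeff_id (n m j : ℕ) (hmn : m + 1 ≤ n) (hj : j ≤ m) :
    ((m:ℂ) * ((n:ℂ) - m) - ((m:ℂ)+1) * ((n:ℂ)-(m:ℂ)+1) * ((m:ℂ)-(j:ℂ)) / ((m:ℂ)-(j:ℂ)+1))
    = ∑ k ∈ Finset.Icc 1 m, (((n:ℂ)-(m:ℂ)+1)/(m.choose k)) *
        ((j.choose k : ℂ) - 2*((m.choose k:ℂ)/(n.choose k))*(m.choose k)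
          + ((m.choose k:ℂ)/(n.choose k))^2*(n.choose k)) := by
  have hterm : ∀ k ∈ Finset.Icc 1 m,
      (((n:ℂ)-(m:ℂ)+1)/(m.choose k)) *
        ((j.choose k : ℂ) - 2*((m.choose k:ℂ)/(n.choose k))*(m.choose k)
          + ((m.choose k:ℂ)/(n.choose k))^2*(n.choose k))
      = ((n:ℂ)-(m:ℂ)+1) * ((j.choose k : ℂ)/(m.choose k))
        - ((n:ℂ)-(m:ℂ)+1) * ((m.choose k : ℂ)/(n.choose k)) := by
    intro k hk
    rw [Finset.mem_Icc] at hk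
    have hm : (m.choose k : ℂ) ≠ 0 := Nat.cast_ne_zero.2 (Nat.choose_pos hk.2).ne'
    have hn : (n.choose k : ℂ) ≠ 0 := Nat.cast_ne_zero.2 (Nat.choose_pos (by omega)).ne'
    field_simp
    ring
  rw [Finset.sum_congr rfl hterm, Finset.sum_sub_distrib, ← Finset.mul_sum, ← Finset.mul_sum]
  have hins : Finset.range (m+1) = insert 0 (Finset.Icc 1 m) := by
    ext x; simp [Finset.mem_range, Finset.mem_Icc]; omega
  have hs1 : ∑ k ∈ Finset.Icc 1 m, (j.choose k : ℂ)/(m.choose k)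
      = ((m:ℂ)+1) / ((m:ℂ) - j + 1) - 1 := by
    have := sum_div_choose j m hj
    rw [hins, Finset.sum_insert (by simp)] at this
    simp at this
    linear_combination this
  have hs2 : ∑ k ∈ Finset.Icc 1 m, (m.choose k : ℂ)/(n.choose k)
      = ((n:ℂ)+1) / ((n:ℂ) - m + 1) - 1 := by
    have hext : ∑ k ∈ Finset.range (n+1), (m.choose k : ℂ) / (n.choose k)
        = ∑ k ∈ Finset.range (m+1), (m.choose k : ℂ) / (n.choose k) := by
      refine (Finset.sum_subset (Finset.range_subset_range.2 (by omega)) ?_).symm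
      intro k _ hk
      rw [Finset.mem_range, not_lt] at hk
      rw [Nat.choose_eq_zero_of_lt (by omega)]
      simp
    have := sum_div_choose m n (by omega)
    rw [hext, hins, Finset.sum_insert (by simp)] at this
    simp at this
    linear_combination this
  rw [hs1, hs2]
  have hd1 : ((m:ℂ) - j + 1) ≠ 0 := by
    have : ((m:ℂ) - j + 1) = ((m + 1 - j : ℕ) : ℂ) := by
      push_cast [Nat.cast_sub (show j ≤ m + 1 by omega)]; ring
    rw [this]; exact Nat.cast_ne_zero.2 (by omega)
  have hd2 : ((n:ℂ) - m + 1) ≠ 0 := by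
    have : ((n:ℂ) - m + 1) = ((n + 1 - m : ℕ) : ℂ) := by
      push_cast [Nat.cast_sub (show m ≤ n + 1 by omega)]; ring
    rw [this]; exact Nat.cast_ne_zero.2 (by omega)
  field_simp
  ring

lemma count_subsets {n k : ℕ} (s : Finset (Fin n)) (c : ℂ) :
    ∑ γ ∈ (Finset.univ : Finset (Fin n)).powersetCard k, (if γ ⊆ s then c else 0)
      = (s.card.choose k : ℂ) * c := by
  rw [← Finset.sum_filter]
  have hfil : Finset.filter (fun γ => γ ⊆ s) ((Finset.univ : Finset (Fin n)).powersetCard k)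
      = s.powersetCard k := by
    ext γ
    simp [Finset.mem_powersetCard, Finset.mem_filter, Finset.mem_powersetCard_univ]
    tauto
  rw [hfil, Finset.sum_const, Finset.card_powersetCard, nsmul_eq_mul]

theorem stmt_4 {n : ℕ} (hn : 1 ≤ n) (m : ℕ) (hm1 : 1 ≤ m) (hmn : m ≤ n - 1)
    (t : Finset (Fin n) → ℂ) :
    0 ≤ psiForm n m t := by
  have hmn' : m + 1 ≤ n := by omega
  set A := (Finset.univ : Finset (Fin n)).powersetCard m with hA
  set T : ℂ := ∑ α ∈ A, t α with hT
  set P : Finset (Fin n) → ℂ := fun γ => ∑ α ∈ A, if γ ⊆ α then t α else 0 with hP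
  have hTT : conj T * T = ∑ α ∈ A, ∑ β ∈ A, conj (t α) * t β := by
    rw [hT, map_sum, Finset.sum_mul_sum]
  have hPsum : ∀ k : ℕ, ∑ γ ∈ (Finset.univ : Finset (Fin n)).powersetCard k, P γ
      = (m.choose k : ℂ) * T := by
    intro k
    rw [hP, Finset.sum_comm]
    have h : ∀ α ∈ A, (∑ γ ∈ (Finset.univ : Finset (Fin n)).powersetCard k,
        if γ ⊆ α then t α else 0) = (m.choose k : ℂ) * t α := by
      intro α hα
      rw [count_subsets, Finset.mem_powersetCard_univ.1 hα]
    rw [Finset.sum_congr rfl h, ← Finset.mul_sum, hT]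
  have hPP : ∀ k : ℕ, ∑ γ ∈ (Finset.univ : Finset (Fin n)).powersetCard k,
        conj (P γ) * P γ
      = ∑ α ∈ A, ∑ β ∈ A, ((α ∩ β).card.choose k : ℂ) * (conj (t α) * t β) := by
    intro k
    have hexp : ∀ γ : Finset (Fin n), conj (P γ) * P γ
        = ∑ α ∈ A, ∑ β ∈ A,
            (if γ ⊆ α ∩ β then conj (t α) * t β else 0) := by
      intro γ
      rw [hP]
      simp only [map_sum, apply_ite conj, map_zero]
      rw [Finset.sum_mul_sum]
      refine Finset.sum_congr rfl fun α _ => Finset.sum_congr rfl fun β _ => ?_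
      split_ifs with h1 h2 h3 <;> simp_all [Finset.subset_inter_iff]
    rw [Finset.sum_congr rfl (fun γ _ => hexp γ), Finset.sum_comm]
    refine Finset.sum_congr rfl fun α _ => ?_
    rw [Finset.sum_comm]
    exact Finset.sum_congr rfl fun β _ => count_subsets _ _
  -- the square expansion
  have hQ : ∀ k : ℕ,
      ∑ γ ∈ (Finset.univ : Finset (Fin n)).powersetCard k,
        conj (P γ - ((m.choose k:ℂ)/(n.choose k)) * T)
          * (P γ - ((m.choose k:ℂ)/(n.choose k)) * T)
      = ∑ α ∈ A, ∑ β ∈ A,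
          (((α ∩ β).card.choose k : ℂ) - 2*((m.choose k:ℂ)/(n.choose k))*(m.choose k)
            + ((m.choose k:ℂ)/(n.choose k))^2*(n.choose k)) * (conj (t α) * t β) := by
    intro k
    set ek : ℂ := (m.choose k:ℂ)/(n.choose k) with hek
    have hconje : conj ek = ek := by
      rw [hek, map_div₀, map_natCast, map_natCast]
    have hexp : ∀ γ : Finset (Fin n),
        conj (P γ - ek * T) * (P γ - ek * T)
        = conj (P γ) * P γ - ek * (conj (P γ) * T) - ek * (conj T * P γ)
            + ek ^ 2 * (conj T * T) := by
      intro γ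
      rw [map_sub, map_mul, hconje]
      ring
    rw [Finset.sum_congr rfl (fun γ _ => hexp γ)]
    rw [Finset.sum_add_distrib, Finset.sum_sub_distrib, Finset.sum_sub_distrib, hPP]
    have h2 : ∑ γ ∈ (Finset.univ : Finset (Fin n)).powersetCard k,
        ek * (conj (P γ) * T) = ek * ((m.choose k : ℂ) * (conj T * T)) := by
      rw [← Finset.mul_sum, ← Finset.sum_mul, ← map_sum, hPsum, map_mul, map_natCast]
      ring_nf
    have h3 : ∑ γ ∈ (Finset.univ : Finset (Fin n)).powersetCard k,
        ek * (conj T * P γ) = ek * ((m.choose k : ℂ) * (conj T * T)) := by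
      rw [← Finset.mul_sum, ← Finset.mul_sum, hPsum]
      ring_nf
    have h4 : ∑ γ ∈ (Finset.univ : Finset (Fin n)).powersetCard k,
        ek ^ 2 * (conj T * T) = (n.choose k : ℂ) * (ek ^ 2 * (conj T * T)) := by
      rw [Finset.sum_const, Finset.card_powersetCard, Finset.card_univ, Fintype.card_fin,
        nsmul_eq_mul]
    rw [h2, h3, h4]
    have hRHS : ∑ α ∈ A, ∑ β ∈ A,
        (((α ∩ β).card.choose k : ℂ) - 2*ek*(m.choose k) + ek^2*(n.choose k))
          * (conj (t α) * t β)
        = (∑ α ∈ A, ∑ β ∈ A, ((α ∩ β).card.choose k : ℂ) * (conj (t α) * t β))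
          - (2*ek*(m.choose k)) * (∑ α ∈ A, ∑ β ∈ A, conj (t α) * t β)
          + (ek^2*(n.choose k)) * (∑ α ∈ A, ∑ β ∈ A, conj (t α) * t β) := by
      simp only [sub_mul, add_mul, Finset.sum_sub_distrib, Finset.sum_add_distrib,
        ← Finset.mul_sum]
    rw [hRHS, ← hTT]
    ring
  -- rewrite psiForm
  have hstepA : psiForm n m t
      = ∑ α ∈ A, ∑ β ∈ A,
          ((m : ℂ) * ((n : ℂ) - m) -
            ((m : ℂ) + 1) * ((n : ℂ) - m + 1) * ((m : ℂ) - ((α ∩ β).card : ℕ))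
              / ((m : ℂ) - ((α ∩ β).card : ℕ) + 1)) * (conj (t α) * t β) := by
    unfold psiForm
    simp only [Finset.mul_sum, mul_ite, mul_zero]
    rw [Finset.sum_comm]
    refine Finset.sum_congr rfl fun α hα => ?_
    rw [Finset.sum_comm]
    refine Finset.sum_congr rfl fun β hβ => ?_
    have hmem : (α ∩ β).card ∈ Finset.range (m+1) := by
      rw [Finset.mem_range]
      have : (α ∩ β).card ≤ α.card := Finset.card_le_card Finset.inter_subset_left
      rw [Finset.mem_powersetCard_univ.1 hα] at this
      omega
    rw [Finset.sum_ite_eq (Finset.range (m+1)) ((α ∩ β).card), if_pos hmem]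
  -- apply the coefficient identity and regroup
  have hstepC : psiForm n m t
      = ∑ k ∈ Finset.Icc 1 m, (((n:ℂ)-(m:ℂ)+1)/(m.choose k)) *
          ∑ γ ∈ (Finset.univ : Finset (Fin n)).powersetCard k,
            conj (P γ - ((m.choose k:ℂ)/(n.choose k)) * T)
              * (P γ - ((m.choose k:ℂ)/(n.choose k)) * T) := by
    rw [hstepA]
    have hco : ∀ α ∈ A, ∀ β ∈ A,
        ((m : ℂ) * ((n : ℂ) - m) -
          ((m : ℂ) + 1) * ((n : ℂ) - m + 1) * ((m : ℂ) - ((α ∩ β).card : ℕ))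
            / ((m : ℂ) - ((α ∩ β).card : ℕ) + 1)) * (conj (t α) * t β)
        = ∑ k ∈ Finset.Icc 1 m, (((n:ℂ)-(m:ℂ)+1)/(m.choose k)) *
            ((((α ∩ β).card.choose k : ℂ) - 2*((m.choose k:ℂ)/(n.choose k))*(m.choose k)
              + ((m.choose k:ℂ)/(n.choose k))^2*(n.choose k)) * (conj (t α) * t β)) := by
      intro α hα β hβ
      have hjle : (α ∩ β).card ≤ m := by
        have : (α ∩ β).card ≤ α.card := Finset.card_le_card Finset.inter_subset_left
        rw [Finset.mem_powersetCard_univ.1 hα] at this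
        exact this
      rw [coeff_id n m ((α ∩ β).card) hmn' hjle, Finset.sum_mul]
      exact Finset.sum_congr rfl fun k _ => by ring
    refine Eq.trans (Finset.sum_congr rfl fun α hα =>
      Finset.sum_congr rfl fun β hβ => hco α hα β hβ) ?_
    refine Eq.trans (Finset.sum_congr rfl fun α _ => Finset.sum_comm) ?_
    refine Eq.trans (Finset.sum_comm) ?_
    refine Finset.sum_congr rfl fun k _ => ?_
    rw [hQ k, Finset.mul_sum]
    exact Finset.sum_congr rfl fun α _ => (Finset.mul_sum _ _ _).symm
  -- nonnegativity
  rw [hstepC]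
  apply Finset.sum_nonneg
  intro k hk
  apply mul_nonneg
  · have hrw : (((n:ℂ)-(m:ℂ)+1)/(m.choose k))
        = ((((n + 1 - m : ℕ) : ℝ) / ((m.choose k : ℕ) : ℝ) : ℝ) : ℂ) := by
      push_cast [Nat.cast_sub (show m ≤ n + 1 by omega)]
      ring
    rw [hrw]
    rw [Complex.zero_le_real]
    positivity
  · apply Finset.sum_nonneg
    intro γ _
    simpa using star_mul_self_nonneg (P γ - ((m.choose k:ℂ)/(n.choose k)) * T)
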